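/- Let G be a group satisfying hypotheses (H1) and (H2). If V ≤ W are infinite virtually cyclic subgroups of G, then V_max = W_max. -/

import Mathlib

/-- A subgroup is infinite cyclic if it is infinite and generated by a single element. -/
def IsInfiniteCyclicSubgroup {G : Type*} [Group G] (C : Subgroup G) : Prop :=
  (∃ g : G, C = Subgroup.zpowers g) ∧ (C : Set G).Infinite

/-- A subgroup is infinite virtually cyclic if it is infinite and contains a cyclic
subgroup of finite index. -/
def IsInfiniteVirtuallyCyclicSubgroup {G : Type*} [Group G] (V : Subgroup G) : Prop :=
  (V : Set G).Infinite ∧ ∃ C : Subgroup V, C.FiniteIndex ∧ IsCyclic C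

/-- `C` is an infinite cyclic subgroup of `V` which is normal in `V`. -/
def IsInfCyclicNormalIn {G : Type*} [Group G] (C V : Subgroup G) : Prop :=
  IsInfiniteCyclicSubgroup C ∧ C ≤ V ∧ ∀ v ∈ V, ∀ c ∈ C, v * c * v⁻¹ ∈ C

/-- `V_max = ⋃ { N_G(C) : C infinite cyclic subgroup of V normal in V }`. -/
def VmaxSet {G : Type*} [Group G] (V : Subgroup G) : Set G :=
  ⋃ C ∈ {C : Subgroup G | IsInfCyclicNormalIn C V}, (Subgroup.normalizer (C : Set G) : Set G)

/-- (H1): every infinite cyclic subgroup has finite index in its centralizer. -/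
def HypH1 (G : Type*) [Group G] : Prop :=
  ∀ C : Subgroup G, IsInfiniteCyclicSubgroup C →
    C.relIndex (Subgroup.centralizer (C : Set G)) ≠ 0

/-- (H2): there is an upper bound on the orders of finite subgroups. -/
def HypH2 (G : Type*) [Group G] : Prop :=
  ∃ b : ℕ, 0 < b ∧ ∀ H : Subgroup G, (H : Set G).Finite → Nat.card H ≤ b



open Subgroup

section Aux

variable {G : Type*} [Group G]

/-- An element generating an infinite subgroup has infinite order. -/
lemma aux_not_isOfFinOrder {z : G}
    (h : ((Subgroup.zpowers z : Subgroup G) : Set G).Infinite) : ¬ IsOfFinOrder z := by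
  intro hfin
  have h1 : Infinite ↥(Subgroup.zpowers z) := Set.infinite_coe_iff.mpr h
  have h2 : Nat.card ↥(Subgroup.zpowers z) = 0 := Nat.card_eq_zero_of_infinite
  rw [Nat.card_zpowers] at h2
  exact hfin.orderOf_pos.ne' h2

/-- Every subgroup of an infinite cyclic group is `zpowers` of a power of the generator. -/
lemma aux_exists_zpowers {z : G} {D : Subgroup G} (hD : D ≤ Subgroup.zpowers z) :
    ∃ k : ℤ, D = Subgroup.zpowers (z ^ k) := by
  let S : AddSubgroup ℤ :=
  { carrier := {n : ℤ | z ^ n ∈ D}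
    zero_mem' := by simpa using D.one_mem
    add_mem' := fun {a b} ha hb => by simpa [zpow_add] using D.mul_mem ha hb
    neg_mem' := fun {a} ha => by simpa [zpow_neg] using D.inv_mem ha }
  obtain ⟨a, ha⟩ := Int.subgroup_cyclic S
  refine ⟨a, le_antisymm ?_ ?_⟩
  · intro x hx
    obtain ⟨n, hn⟩ := hD hx
    have hnS : n ∈ S := by simpa [S, hn] using hx
    rw [ha] at hnS
    obtain ⟨m, hm⟩ := AddSubgroup.mem_closure_singleton.mp hnS
    have hn' : z ^ n = x := hn
    refine ⟨m, ?_⟩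
    show (z ^ a) ^ m = x
    rw [← zpow_mul]
    have ham : a * m = n := by rw [mul_comm]; simpa [smul_eq_mul] using hm
    rw [ham]; exact hn'
  · have haS : a ∈ S := by
      rw [ha]; exact AddSubgroup.subset_closure rfl
    rw [Subgroup.zpowers_le]
    exact haS

lemma aux_infinite_of_relIndex {A B : Subgroup G} (hle : A ≤ B)
    (h : A.relIndex B ≠ 0) (hB : (B : Set G).Infinite) : (A : Set G).Infinite := by
  have hBinf : Infinite ↥B := Set.infinite_coe_iff.mpr hB
  have hcard : Nat.card ↥(A.subgroupOf B) * (A.subgroupOf B).index = Nat.card ↥B :=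
    Subgroup.card_mul_index _
  have hB0 : Nat.card ↥B = 0 := Nat.card_eq_zero_of_infinite
  rw [hB0] at hcard
  have h0 : Nat.card ↥(A.subgroupOf B) = 0 := by
    rcases Nat.mul_eq_zero.mp hcard with h' | h'
    · exact h'
    · exact absurd h' h
  have : Nat.card ↥A = 0 := by
    rw [← h0]; exact Nat.card_congr (Subgroup.subgroupOfEquivOfLe hle).toEquiv.symm
  rcases Nat.card_eq_zero.mp this with h' | h'
  · exact absurd h' (not_isEmpty_of_nonempty _)
  · exact Set.infinite_coe_iff.mp h'

/-- The index of `⟨z^k⟩` in `⟨z⟩` is finite for `k ≠ 0` and `z` of infinite order. -/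
lemma aux_relIndex_zpow {z : G} (hz : ¬ IsOfFinOrder z) {k : ℤ} (hk : k ≠ 0) :
    (Subgroup.zpowers (z ^ k)).relIndex (Subgroup.zpowers z) ≠ 0 := by
  have hinj : Function.Injective fun n : ℤ => z ^ n :=
    injective_zpow_iff_not_isOfFinOrder.mpr hz
  have hrange : ((zpowersHom G) z).range = Subgroup.zpowers z := by
    ext x
    constructor
    · rintro ⟨n, rfl⟩; exact ⟨n.toAdd, rfl⟩
    · rintro ⟨n, rfl⟩; exact ⟨Multiplicative.ofAdd n, rfl⟩
  have h1 : ((Subgroup.zpowers (z ^ k)).comap ((zpowersHom G) z)).index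
      = (Subgroup.zpowers (z ^ k)).relIndex (Subgroup.zpowers z) := by
    rw [Subgroup.index_comap, hrange]
  have h2 : (Subgroup.zpowers (z ^ k)).comap ((zpowersHom G) z)
      = AddSubgroup.toSubgroup (AddSubgroup.zmultiples k) := by
    ext n
    simp only [Subgroup.mem_comap, zpowersHom_apply]
    constructor
    · rintro ⟨m, hm⟩
      have hm' : (z ^ k) ^ m = z ^ n.toAdd := hm
      have : k * m = n.toAdd := hinj (by simpa [← zpow_mul] using hm')
      have hmem : n.toAdd ∈ AddSubgroup.zmultiples k :=
        Int.mem_zmultiples_iff.mpr ⟨m, this.symm⟩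
      exact hmem
    · intro hn
      obtain ⟨m, hm⟩ := Int.mem_zmultiples_iff.mp
        (show n.toAdd ∈ AddSubgroup.zmultiples k from hn)
      refine ⟨m, ?_⟩
      show (z ^ k) ^ m = z ^ n.toAdd
      rw [← zpow_mul, hm, mul_comm]
  rw [← h1, h2, AddSubgroup.index_toSubgroup, Int.index_zmultiples]
  simpa using hk

/-- An element normalizing `⟨z⟩` (with `z` of infinite order) conjugates `z` to `z` or `z⁻¹`,
and hence normalizes `⟨z^k⟩` for every `k`. -/
lemma aux_mem_normalizer_zpow {z g : G} (hz : ¬ IsOfFinOrder z)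
    (hg : g ∈ Subgroup.normalizer ((Subgroup.zpowers z : Subgroup G) : Set G)) (k : ℤ) :
    g ∈ Subgroup.normalizer ((Subgroup.zpowers (z ^ k) : Subgroup G) : Set G) := by
  have hinj : Function.Injective fun n : ℤ => z ^ n :=
    injective_zpow_iff_not_isOfFinOrder.mpr hz
  -- first: g * z * g⁻¹ = z ^ ε with ε = ±1
  obtain ⟨a, ha0⟩ : g * z * g⁻¹ ∈ Subgroup.zpowers z :=
    (Subgroup.mem_normalizer_iff.mp hg z).mp (Subgroup.mem_zpowers z)
  have ha : z ^ a = g * z * g⁻¹ := ha0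
  obtain ⟨b, hb0⟩ : g⁻¹ * z * g ∈ Subgroup.zpowers z := by
    refine (Subgroup.mem_normalizer_iff.mp hg (g⁻¹ * z * g)).mpr ?_
    have : g * (g⁻¹ * z * g) * g⁻¹ = z := by group
    rw [this]; exact Subgroup.mem_zpowers z
  have hb : z ^ b = g⁻¹ * z * g := hb0
  have hab : a * b = 1 := by
    have : z ^ (a * b) = z ^ (1 : ℤ) := by
      rw [zpow_one, zpow_mul, ha]
      calc (g * z * g⁻¹) ^ b = g * z ^ b * g⁻¹ := conj_zpow
        _ = g * (g⁻¹ * z * g) * g⁻¹ := by rw [hb]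
        _ = z := by group
    exact hinj this
  have hconj : ∀ n : ℤ, g * z ^ n * g⁻¹ = z ^ (a * n) := by
    intro n
    rw [zpow_mul, ha, conj_zpow]
  have hconj' : ∀ n : ℤ, g⁻¹ * z ^ n * g = z ^ (b * n) := by
    intro n
    rw [zpow_mul, hb]
    calc g⁻¹ * z ^ n * g = g⁻¹ * z ^ n * g⁻¹⁻¹ := by rw [inv_inv]
      _ = (g⁻¹ * z * g⁻¹⁻¹) ^ n := conj_zpow.symm
      _ = (g⁻¹ * z * g) ^ n := by rw [inv_inv]
  rw [Subgroup.mem_normalizer_iff]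
  intro h
  constructor
  · rintro ⟨m, hmm⟩
    have hmm' : (z ^ k) ^ m = h := hmm
    rw [← hmm', ← zpow_mul, hconj (k * m)]
    refine ⟨a * m, ?_⟩
    show (z ^ k) ^ (a * m) = z ^ (a * (k * m))
    rw [← zpow_mul]; ring_nf
  · rintro hmem
    obtain ⟨m, hm⟩ := hmem
    have hm' : (z ^ k) ^ m = g * h * g⁻¹ := hm
    have : h = g⁻¹ * (z ^ k) ^ m * g := by
      rw [hm']; group
    rw [this, ← zpow_mul, hconj' (k * m)]
    refine ⟨b * m, ?_⟩
    show (z ^ k) ^ (b * m) = z ^ (b * (k * m))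
    rw [← zpow_mul]; ring_nf

/-- An infinite subgroup of an infinite virtually cyclic subgroup has finite (i.e. nonzero)
relative index. -/
lemma aux_relIndex_ne_zero {Wg : Subgroup G} (hW : IsInfiniteVirtuallyCyclicSubgroup Wg)
    {C : Subgroup G} (hC : (C : Set G).Infinite) (hle : C ≤ Wg) : C.relIndex Wg ≠ 0 := by
  obtain ⟨hWinf, Z0, hZ0fin, hZ0cyc⟩ := hW
  obtain ⟨ζ, hζ⟩ := hZ0cyc
  set z : G := ((ζ : ↥Wg) : G) with hzdef
  have hZ0eq : Z0 = Subgroup.zpowers (ζ : ↥Wg) := by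
    ext x
    constructor
    · intro hx
      obtain ⟨n, hn⟩ := hζ ⟨x, hx⟩
      have hn' : ζ ^ n = ⟨x, hx⟩ := hn
      refine ⟨n, ?_⟩
      show (ζ : ↥Wg) ^ n = x
      rw [← Subgroup.coe_zpow, hn']
    · rintro ⟨n, hn⟩
      have hn' : (ζ : ↥Wg) ^ n = x := hn
      rw [← hn', ← Subgroup.coe_zpow]
      exact (ζ ^ n).2
  set Z : Subgroup G := Z0.map Wg.subtype with hZdef
  have hZle : Z ≤ Wg := Subgroup.map_subtype_le Z0
  have hZz : Z = Subgroup.zpowers z := by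
    rw [hZdef, hZ0eq, MonoidHom.map_zpowers]; rfl
  have hZrel : Z.relIndex Wg ≠ 0 := by
    have : Z.subgroupOf Wg = Z0 := Subgroup.comap_map_eq_self_of_injective Wg.subtype_injective Z0
    rw [Subgroup.relIndex, this]
    exact hZ0fin.index_ne_zero
  have hZinf : (Z : Set G).Infinite := aux_infinite_of_relIndex hZle hZrel hWinf
  have hz : ¬ IsOfFinOrder z := aux_not_isOfFinOrder (hZz ▸ hZinf)
  -- Z ⊓ C is infinite
  have hZCrelC : Z.relIndex C ≠ 0 := fun h0 =>
    hZrel (Subgroup.relIndex_eq_zero_of_le_right hle h0)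
  have hZCinf : ((Z ⊓ C : Subgroup G) : Set G).Infinite := by
    refine aux_infinite_of_relIndex inf_le_right ?_ hC
    rw [Subgroup.inf_relIndex_right]
    exact hZCrelC
  -- Z ⊓ C = ⟨z^k⟩ with k ≠ 0
  obtain ⟨k, hk⟩ := aux_exists_zpowers (le_trans inf_le_left (le_of_eq hZz))
  have hk0 : k ≠ 0 := by
    rintro rfl
    rw [hk] at hZCinf
    simp only [zpow_zero, Subgroup.zpowers_one_eq_bot, Subgroup.coe_bot] at hZCinf
    exact hZCinf (Set.finite_singleton 1)
  have h1 : (Z ⊓ C).relIndex Z ≠ 0 := by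
    rw [hk, hZz]
    exact aux_relIndex_zpow hz hk0
  have h2 : (Z ⊓ C).relIndex Wg ≠ 0 := Subgroup.relIndex_ne_zero_trans h1 hZrel
  intro h0
  exact h2 (Subgroup.relIndex_eq_zero_of_le_left inf_le_right h0)

end Aux

/-- For a group satisfying (H1) and (H2): if `V ≤ W` are infinite virtually cyclic
subgroups of `G`, then `V_max = W_max`. -/
theorem vmax_eq_of_le
    {G : Type*} [Group G] (h1 : HypH1 G) (h2 : HypH2 G)
    (V W : Subgroup G) (hV : IsInfiniteVirtuallyCyclicSubgroup V)
    (hW : IsInfiniteVirtuallyCyclicSubgroup W) (hVW : V ≤ W) :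
    VmaxSet V = VmaxSet W := by
  ext g
  simp only [VmaxSet, Set.mem_iUnion, Set.mem_setOf_eq, SetLike.mem_coe, exists_prop]
  constructor
  · rintro ⟨C, ⟨⟨⟨z, rfl⟩, hCinf⟩, hCV, hCnorm⟩, hgN⟩
    have hz : ¬ IsOfFinOrder z := aux_not_isOfFinOrder hCinf
    have hCW : Subgroup.zpowers z ≤ W := hCV.trans hVW
    have hrel : (Subgroup.zpowers z).relIndex W ≠ 0 := aux_relIndex_ne_zero hW hCinf hCW
    haveI : ((Subgroup.zpowers z).subgroupOf W).FiniteIndex := ⟨hrel⟩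
    set Dcore := ((Subgroup.zpowers z).subgroupOf W).normalCore with hDcoredef
    haveI : Dcore.FiniteIndex := Subgroup.finiteIndex_normalCore _
    set D : Subgroup G := Dcore.map W.subtype with hDdef
    have hDle : D ≤ Subgroup.zpowers z := by
      calc D ≤ ((Subgroup.zpowers z).subgroupOf W).map W.subtype :=
          Subgroup.map_mono (Subgroup.normalCore_le _)
        _ = Subgroup.zpowers z ⊓ W := Subgroup.subgroupOf_map_subtype _ _
        _ ≤ Subgroup.zpowers z := inf_le_left
    have hDW : D ≤ W := Subgroup.map_subtype_le _
    have hDrel : D.relIndex W ≠ 0 := by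
      have heq : D.subgroupOf W = Dcore :=
        Subgroup.comap_map_eq_self_of_injective W.subtype_injective Dcore
      rw [Subgroup.relIndex, heq]
      exact Subgroup.FiniteIndex.index_ne_zero
    have hDinf : (D : Set G).Infinite := aux_infinite_of_relIndex hDW hDrel hW.1
    obtain ⟨k, hk⟩ := aux_exists_zpowers hDle
    refine ⟨D, ⟨⟨⟨z ^ k, hk⟩, hDinf⟩, hDW, ?_⟩, ?_⟩
    · intro v hv c hc
      obtain ⟨c', hc', rfl⟩ := Subgroup.mem_map.mp hc
      refine Subgroup.mem_map.mpr ⟨⟨v, hv⟩ * c' * ⟨v, hv⟩⁻¹, ?_, rfl⟩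
      exact Subgroup.Normal.conj_mem (Subgroup.normalCore_normal _) c' hc' ⟨v, hv⟩
    · rw [hk]
      exact aux_mem_normalizer_zpow hz hgN k
  · rintro ⟨C, ⟨⟨⟨z, rfl⟩, hCinf⟩, hCW, hCnorm⟩, hgN⟩
    have hz : ¬ IsOfFinOrder z := aux_not_isOfFinOrder hCinf
    have hrelW : (Subgroup.zpowers z).relIndex W ≠ 0 := aux_relIndex_ne_zero hW hCinf hCW
    have hrelV : (Subgroup.zpowers z).relIndex V ≠ 0 := fun h0 =>
      hrelW (Subgroup.relIndex_eq_zero_of_le_right hVW h0)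
    have hinf : ((Subgroup.zpowers z ⊓ V : Subgroup G) : Set G).Infinite := by
      refine aux_infinite_of_relIndex inf_le_right ?_ hV.1
      rw [Subgroup.inf_relIndex_right]
      exact hrelV
    obtain ⟨k, hk⟩ :=
      aux_exists_zpowers (inf_le_left : Subgroup.zpowers z ⊓ V ≤ Subgroup.zpowers z)
    refine ⟨Subgroup.zpowers z ⊓ V, ⟨⟨⟨z ^ k, hk⟩, hinf⟩, inf_le_right, ?_⟩, ?_⟩
    · intro v hv c hc
      obtain ⟨hc1, hc2⟩ := Subgroup.mem_inf.mp hc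
      exact Subgroup.mem_inf.mpr ⟨hCnorm v (hVW hv) c hc1,
        V.mul_mem (V.mul_mem hv hc2) (V.inv_mem hv)⟩
    · rw [hk]
      exact aux_mem_normalizer_zpow hz hgN k
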